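/- Let m, ℓ, r be positive integers and ε ∈ (0,1). Set k = ⌈3m/(εr)⌉. If I₁,…,I_ℓ are independently chosen uniformly random k-element subsets of [m] and ln ℓ ≤ m/r, then with probability at least 1 − e^{−m}, the union of any r distinct subsets among I₁,…,I_ℓ has size at least (1−ε)m. -/

import Mathlib

open scoped Classical

open Finset

lemma descFac_ineq (a b : ℕ) (hab : a ≤ b) :
    ∀ K : ℕ, a.descFactorial K * b ^ K ≤ b.descFactorial K * a ^ K := by
  intro K
  induction K with
  | zero => simp
  | succ n ih =>
    rw [Nat.descFactorial_succ, Nat.descFactorial_succ, pow_succ, pow_succ]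
    calc (a - n) * a.descFactorial n * (b ^ n * b)
        = ((a - n) * b) * (a.descFactorial n * b ^ n) := by ring
      _ ≤ ((b - n) * a) * (b.descFactorial n * a ^ n) := by
          refine Nat.mul_le_mul ?_ ih
          rw [Nat.sub_mul, Nat.sub_mul, mul_comm a b]
          exact Nat.sub_le_sub_left (Nat.mul_le_mul_left n hab) (b * a)
      _ = (b - n) * b.descFactorial n * (a ^ n * a) := by ring

lemma choose_ratio (a b K : ℕ) (hab : a ≤ b) :
    a.choose K * b ^ K ≤ b.choose K * a ^ K := by
  have h := descFac_ineq a b hab K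
  rw [Nat.descFactorial_eq_factorial_mul_choose, Nat.descFactorial_eq_factorial_mul_choose,
    mul_assoc, mul_assoc] at h
  exact Nat.le_of_mul_le_mul_left h (Nat.factorial_pos K)

lemma choose_le_two_pow' (n t : ℕ) : n.choose t ≤ 2 ^ n := by
  rcases le_or_gt t n with h | h
  · calc n.choose t ≤ ∑ i ∈ Finset.range (n+1), n.choose i :=
        Finset.single_le_sum (fun i _ => Nat.zero_le _) (mem_range.2 (Nat.lt_succ_of_le h))
    _ = 2 ^ n := Nat.sum_range_choose n
  · rw [Nat.choose_eq_zero_of_lt h]; exact Nat.zero_le _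

/-- random k-subsets form a disperser with probability ≥ 1 - e^{-m}. -/
theorem stmt_0 (m ℓ r : ℕ) (hm : 0 < m) (hℓ : 0 < ℓ) (hr : 0 < r)
    (ε : ℝ) (hε : ε ∈ Set.Ioo (0:ℝ) 1)
    (k : ℕ) (hk : k = ⌈(3 * m) / (ε * r)⌉₊)
    (hlog : Real.log ℓ ≤ (m : ℝ) / r) :
    (1 - Real.exp (-(m : ℝ))) *
        (Finset.univ : Finset (Fin ℓ → {s : Finset (Fin m) // s.card = k})).card ≤
      ((Finset.univ.filter
          (fun I : Fin ℓ → {s : Finset (Fin m) // s.card = k} =>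
            ∀ T : Finset (Fin ℓ), T.card = r →
              (1 - ε) * m ≤ ((T.biUnion (fun i => (I i).1)).card : ℝ))).card : ℝ) := by
  classical
  obtain ⟨hε0, hε1⟩ := hε
  have hmpos : (0 : ℝ) < (m : ℝ) := by exact_mod_cast hm
  set pred : (Fin ℓ → {s : Finset (Fin m) // s.card = k}) → Prop := fun I =>
    ∀ T : Finset (Fin ℓ), T.card = r →
      (1 - ε) * m ≤ ((T.biUnion (fun i => (I i).1)).card : ℝ) with hpred
  have hsplit : (Finset.univ.filter pred).card
      + (Finset.univ.filter (fun I => ¬ pred I)).card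
      = (Finset.univ : Finset (Fin ℓ → {s : Finset (Fin m) // s.card = k})).card :=
    Finset.card_filter_add_card_filter_not pred
  suffices hbad : ((Finset.univ.filter (fun I => ¬ pred I)).card : ℝ) ≤
      Real.exp (-(m : ℝ)) *
        (Finset.univ : Finset (Fin ℓ → {s : Finset (Fin m) // s.card = k})).card by
    have h1 : ((Finset.univ.filter pred).card : ℝ)
        + ((Finset.univ.filter (fun I => ¬ pred I)).card : ℝ)
        = ((Finset.univ : Finset (Fin ℓ → {s : Finset (Fin m) // s.card = k})).card : ℝ) := by
      exact_mod_cast hsplit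
    nlinarith [h1, hbad]
  -- trivial case: predicate always holds
  by_cases htriv : ∀ I : Fin ℓ → {s : Finset (Fin m) // s.card = k}, pred I
  · have hempty : (Finset.univ.filter (fun I => ¬ pred I)) = ∅ := by
      apply Finset.filter_eq_empty_iff.2
      intro I _
      exact not_not_intro (htriv I)
    rw [hempty]
    simp only [Finset.card_empty, Nat.cast_zero]
    positivity
  -- derive k < m
  have hkm : k < m := by
    by_contra hcon
    push_neg at hcon
    apply htriv
    intro I T hT
    have hTne : T.Nonempty := by rw [← Finset.card_pos, hT]; exact hr
    obtain ⟨i, hi⟩ := hTne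
    have h2 : (I i).1 ⊆ T.biUnion fun j => (I j).1 :=
      Finset.subset_biUnion_of_mem (fun j => (I j).1) hi
    have h3 : k ≤ (T.biUnion fun j => (I j).1).card := by
      have h5 := Finset.card_le_card h2
      rwa [(I i).2] at h5
    have h4 : (m : ℝ) ≤ ((T.biUnion fun j => (I j).1).card : ℝ) := by
      exact_mod_cast le_trans hcon h3
    nlinarith [mul_nonneg hε0.le hmpos.le]
  have hrl : r ≤ ℓ := by
    by_contra hcon
    push_neg at hcon
    apply htriv
    intro I T hT
    exfalso
    have : T.card ≤ ℓ := by simpa using Finset.card_le_univ T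
    omega
  -- setup
  set t : ℕ := ⌊ε * m⌋₊ + 1 with ht
  have hfl : (⌊ε * m⌋₊ : ℝ) ≤ ε * m := Nat.floor_le (by positivity)
  have htm : t ≤ m := by
    have h2 : (⌊ε * m⌋₊ : ℝ) < m := lt_of_le_of_lt hfl (by nlinarith)
    have h3 : ⌊ε * m⌋₊ < m := by exact_mod_cast h2
    omega
  have htε : (ε * m : ℝ) < t := by
    have h := Nat.lt_floor_add_one (ε * m)
    rw [ht]
    push_cast
    linarith
  -- events
  set E : Finset (Fin ℓ) × Finset (Fin m) → Finset (Fin ℓ → {s : Finset (Fin m) // s.card = k}) :=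
    fun p => Fintype.piFinset (fun i => if i ∈ p.1 then
      Finset.univ.filter (fun s : {s : Finset (Fin m) // s.card = k} => s.1 ⊆ p.2ᶜ)
      else Finset.univ) with hE
  set pairs : Finset (Finset (Fin ℓ) × Finset (Fin m)) :=
    (Finset.univ.powersetCard r) ×ˢ (Finset.univ.powersetCard t) with hpairs
  have hEcard : ∀ p ∈ pairs, (E p).card =
      (Nat.choose (m - t) k) ^ r * (Nat.choose m k) ^ (ℓ - r) := by
    rintro ⟨T, W⟩ hp
    rw [hpairs, Finset.mem_product, Finset.mem_powersetCard_univ,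
      Finset.mem_powersetCard_univ] at hp
    obtain ⟨hT, hW⟩ := hp
    rw [hE]
    rw [Fintype.card_piFinset]
    simp only [apply_ite Finset.card]
    have hc : (Finset.univ.filter
        (fun s : {s : Finset (Fin m) // s.card = k} => s.1 ⊆ Wᶜ)).card
        = Nat.choose (m - t) k := by
      have hbij : (Finset.univ.filter
          (fun s : {s : Finset (Fin m) // s.card = k} => s.1 ⊆ Wᶜ)).card
          = (Wᶜ.powersetCard k).card := by
        apply Finset.card_bij (fun s _ => s.1)
        · intro a ha
          rw [Finset.mem_powersetCard]
          exact ⟨(Finset.mem_filter.1 ha).2, a.2⟩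
        · intro a _ b _ h
          exact Subtype.ext h
        · intro b hb
          rw [Finset.mem_powersetCard] at hb
          exact ⟨⟨b, hb.2⟩, Finset.mem_filter.2 ⟨Finset.mem_univ _, hb.1⟩, rfl⟩
      rw [hbij, Finset.card_powersetCard, Finset.card_compl, hW, Fintype.card_fin]
    rw [← Finset.prod_mul_prod_compl T]
    have h1 : (∏ i ∈ T, (if i ∈ T then
        (Finset.univ.filter (fun s : {s : Finset (Fin m) // s.card = k} => s.1 ⊆ Wᶜ)).card
        else (Finset.univ : Finset {s : Finset (Fin m) // s.card = k}).card))
        = (Nat.choose (m - t) k) ^ r := by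
      rw [Finset.prod_congr rfl (fun i hi => by rw [if_pos hi, hc]), Finset.prod_const, hT]
    have h2 : (∏ i ∈ Tᶜ, (if i ∈ T then
        (Finset.univ.filter (fun s : {s : Finset (Fin m) // s.card = k} => s.1 ⊆ Wᶜ)).card
        else (Finset.univ : Finset {s : Finset (Fin m) // s.card = k}).card))
        = (Nat.choose m k) ^ (ℓ - r) := by
      rw [Finset.prod_congr rfl (fun i hi => by rw [if_neg (Finset.mem_compl.1 hi)]),
        Finset.prod_const, Finset.card_compl, Fintype.card_fin, hT, Finset.card_univ,
        Fintype.card_finset_len, Fintype.card_fin]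
    rw [h1, h2]
  have hsub : Finset.univ.filter (fun I => ¬ pred I) ⊆ pairs.biUnion E := by
    intro I hI
    rw [Finset.mem_filter] at hI
    obtain ⟨-, hbadI⟩ := hI
    simp only [hpred] at hbadI
    push_neg at hbadI
    obtain ⟨T, hT, hcard⟩ := hbadI
    set U := (T.biUnion fun i => (I i).1)ᶜ with hU
    have hUcard : t ≤ U.card := by
      have hle : (T.biUnion fun i => (I i).1).card ≤ m := by
        simpa using Finset.card_le_univ (T.biUnion fun i => (I i).1)
      have h1 : U.card = m - (T.biUnion fun i => (I i).1).card := by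
        rw [hU, Finset.card_compl, Fintype.card_fin]
      have h2 : (ε * m : ℝ) < U.card := by
        rw [h1]
        push_cast [Nat.cast_sub hle]
        nlinarith
      have h3 : ⌊ε * m⌋₊ < U.card := by
        exact_mod_cast lt_of_le_of_lt hfl h2
      omega
    obtain ⟨W, hWU, hWcard⟩ := Finset.exists_subset_card_eq hUcard
    refine Finset.mem_biUnion.2 ⟨(T, W), ?_, ?_⟩
    · rw [hpairs, Finset.mem_product, Finset.mem_powersetCard_univ,
        Finset.mem_powersetCard_univ]
      exact ⟨hT, hWcard⟩
    · rw [hE]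
      rw [Fintype.mem_piFinset]
      intro i
      by_cases hiT : i ∈ T
      · rw [if_pos hiT]
        refine Finset.mem_filter.2 ⟨Finset.mem_univ _, ?_⟩
        intro x hx
        rw [Finset.mem_compl]
        intro hxW
        have hxU : x ∈ U := hWU hxW
        have hxB : x ∈ T.biUnion fun j => (I j).1 := Finset.mem_biUnion.2 ⟨i, hiT, hx⟩
        exact (Finset.mem_compl.1 hxU) hxB
      · rw [if_neg hiT]
        exact Finset.mem_univ _
  have hBadcard : (Finset.univ.filter (fun I => ¬ pred I)).card ≤
      Nat.choose ℓ r * Nat.choose m t *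
        ((Nat.choose (m - t) k) ^ r * (Nat.choose m k) ^ (ℓ - r)) := by
    calc (Finset.univ.filter (fun I => ¬ pred I)).card
        ≤ (pairs.biUnion E).card := Finset.card_le_card hsub
      _ ≤ ∑ p ∈ pairs, (E p).card := Finset.card_biUnion_le
      _ = pairs.card * ((Nat.choose (m - t) k) ^ r * (Nat.choose m k) ^ (ℓ - r)) := by
          rw [Finset.sum_congr rfl hEcard, Finset.sum_const, smul_eq_mul]
      _ = _ := by
          rw [hpairs, Finset.card_product, Finset.card_powersetCard,
            Finset.card_powersetCard, Finset.card_univ, Finset.card_univ,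
            Fintype.card_fin, Fintype.card_fin]
  -- total count
  have hNtot : ((Finset.univ : Finset (Fin ℓ → {s : Finset (Fin m) // s.card = k})).card : ℝ)
      = ((Nat.choose m k : ℝ)) ^ ℓ := by
    rw [Finset.card_univ, Fintype.card_fun, Fintype.card_finset_len, Fintype.card_fin,
      Fintype.card_fin]
    push_cast
    ring
  rw [hNtot]
  -- real-number chain
  have hNpos : (0 : ℝ) < (Nat.choose m k : ℝ) := by
    exact_mod_cast Nat.choose_pos (le_of_lt hkm)
  have hratio : ((Nat.choose (m - t) k : ℝ)) ^ r * ((m : ℝ) ^ k) ^ r ≤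
      ((Nat.choose m k : ℝ)) ^ r * (((m - t : ℕ) : ℝ) ^ k) ^ r := by
    rw [← mul_pow, ← mul_pow]
    apply pow_le_pow_left₀ (by positivity)
    exact_mod_cast choose_ratio (m - t) m k (Nat.sub_le m t)
  have hmt : ((m - t : ℕ) : ℝ) ≤ (1 - ε) * m := by
    rw [Nat.cast_sub htm]
    nlinarith
  have hmt0 : (0 : ℝ) ≤ ((m - t : ℕ) : ℝ) := Nat.cast_nonneg _
  have hscalar : ((ℓ : ℝ)) ^ r * (2 : ℝ) ^ m * ((1 - ε) ^ k) ^ r ≤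
      Real.exp (-(3 * m : ℝ)) * Real.exp (m : ℝ) * Real.exp (m : ℝ) := by
    have hℓ1 : (1 : ℝ) ≤ (ℓ : ℝ) := by exact_mod_cast hℓ
    have hℓexp : ((ℓ : ℝ)) ^ r ≤ Real.exp (m : ℝ) := by
      have h1 : (ℓ : ℝ) = Real.exp (Real.log ℓ) := (Real.exp_log (by linarith)).symm
      rw [h1, ← Real.exp_nat_mul]
      apply Real.exp_le_exp.2
      have hrpos : (0 : ℝ) < (r : ℝ) := by exact_mod_cast hr
      calc (r : ℝ) * Real.log ℓ ≤ (r : ℝ) * ((m : ℝ) / r) := by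
            exact mul_le_mul_of_nonneg_left hlog (le_of_lt hrpos)
        _ = (m : ℝ) := by field_simp
    have h2exp : (2 : ℝ) ^ m ≤ Real.exp (m : ℝ) := by
      have h21 : (2 : ℝ) ≤ Real.exp 1 := by linarith [Real.add_one_le_exp (1 : ℝ)]
      calc (2 : ℝ) ^ m ≤ (Real.exp 1) ^ m := pow_le_pow_left₀ (by norm_num) h21 m
        _ = Real.exp (m : ℝ) := by rw [← Real.exp_nat_mul, mul_one]
    have hεexp : ((1 - ε) ^ k) ^ r ≤ Real.exp (-(3 * m : ℝ)) := by
      have h1 : (1 - ε : ℝ) ≤ Real.exp (-ε) := by linarith [Real.add_one_le_exp (-ε)]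
      have h2 : ((1 - ε) ^ k) ^ r ≤ (Real.exp (-ε)) ^ (k * r) := by
        rw [← pow_mul]
        exact pow_le_pow_left₀ (by linarith) h1 (k * r)
      have h3 : (Real.exp (-ε)) ^ (k * r) = Real.exp (-(ε * ((k : ℝ) * r))) := by
        rw [← Real.exp_nat_mul]
        congr 1
        push_cast
        ring
      have hkge : (3 * m : ℝ) / (ε * r) ≤ k := by
        rw [hk]
        exact_mod_cast Nat.le_ceil _
      have h4 : (3 * m : ℝ) ≤ ε * ((k : ℝ) * r) := by
        have hεr : (0 : ℝ) < ε * r := by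
          have : (0 : ℝ) < (r : ℝ) := by exact_mod_cast hr
          positivity
        have h5 : (3 * m : ℝ) ≤ (k : ℝ) * (ε * r) := by rwa [div_le_iff₀ hεr] at hkge
        have h6 : (k : ℝ) * (ε * r) = ε * ((k : ℝ) * r) := by ring
        linarith
      calc ((1 - ε) ^ k) ^ r ≤ (Real.exp (-ε)) ^ (k * r) := h2
        _ = Real.exp (-(ε * ((k : ℝ) * r))) := h3
        _ ≤ Real.exp (-(3 * m : ℝ)) := Real.exp_le_exp.2 (by linarith)
    have hnn2 : (0 : ℝ) ≤ (2 : ℝ) ^ m := by positivity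
    have hnn3 : (0 : ℝ) ≤ ((1 - ε) ^ k) ^ r := pow_nonneg (pow_nonneg (by linarith) k) r
    calc ((ℓ : ℝ)) ^ r * (2 : ℝ) ^ m * ((1 - ε) ^ k) ^ r
        ≤ (Real.exp (m : ℝ) * Real.exp (m : ℝ)) * Real.exp (-(3 * m : ℝ)) := by
          refine mul_le_mul ?_ hεexp hnn3 (by positivity)
          exact mul_le_mul hℓexp h2exp hnn2 (Real.exp_pos _).le
      _ = Real.exp (-(3 * m : ℝ)) * Real.exp (m : ℝ) * Real.exp (m : ℝ) := by ring
  -- assemble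
  have hpow : ((Nat.choose m k : ℝ)) ^ ℓ
      = (Nat.choose m k : ℝ) ^ r * (Nat.choose m k : ℝ) ^ (ℓ - r) := by
    rw [← pow_add]
    congr 1
    omega
  have hC1m : ((((m - t : ℕ)) : ℝ) ^ k) ^ r ≤ ((1 - ε) ^ k) ^ r * ((m : ℝ) ^ k) ^ r := by
    have h1 : (((m - t : ℕ)) : ℝ) ^ k ≤ (1 - ε) ^ k * (m : ℝ) ^ k := by
      rw [← mul_pow]
      exact pow_le_pow_left₀ hmt0 hmt k
    calc ((((m - t : ℕ)) : ℝ) ^ k) ^ r ≤ ((1 - ε) ^ k * (m : ℝ) ^ k) ^ r :=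
          pow_le_pow_left₀ (by positivity) h1 r
      _ = ((1 - ε) ^ k) ^ r * ((m : ℝ) ^ k) ^ r := mul_pow _ _ _
  have hmk : (0 : ℝ) < ((m : ℝ) ^ k) ^ r := by positivity
  have hexpm : Real.exp (-(3 * m : ℝ)) * Real.exp (m : ℝ) * Real.exp (m : ℝ)
      = Real.exp (-(m : ℝ)) := by
    rw [← Real.exp_add, ← Real.exp_add]
    congr 1
    ring
  have hS1 : ((ℓ : ℝ)) ^ r * (2 : ℝ) ^ m * ((Nat.choose (m - t) k : ℝ)) ^ r ≤
      Real.exp (-(m : ℝ)) * (Nat.choose m k : ℝ) ^ r := by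
    apply le_of_mul_le_mul_right _ hmk
    calc ((ℓ : ℝ)) ^ r * (2 : ℝ) ^ m * ((Nat.choose (m - t) k : ℝ)) ^ r * ((m : ℝ) ^ k) ^ r
        = ((ℓ : ℝ)) ^ r * (2 : ℝ) ^ m
            * (((Nat.choose (m - t) k : ℝ)) ^ r * ((m : ℝ) ^ k) ^ r) := by ring
      _ ≤ ((ℓ : ℝ)) ^ r * (2 : ℝ) ^ m
            * (((Nat.choose m k : ℝ)) ^ r * ((((m - t : ℕ)) : ℝ) ^ k) ^ r) := by
          exact mul_le_mul_of_nonneg_left hratio (by positivity)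
      _ ≤ ((ℓ : ℝ)) ^ r * (2 : ℝ) ^ m
            * (((Nat.choose m k : ℝ)) ^ r * (((1 - ε) ^ k) ^ r * ((m : ℝ) ^ k) ^ r)) := by
          refine mul_le_mul_of_nonneg_left ?_ (by positivity)
          exact mul_le_mul_of_nonneg_left hC1m (by positivity)
      _ = (((ℓ : ℝ)) ^ r * (2 : ℝ) ^ m * ((1 - ε) ^ k) ^ r)
            * (((Nat.choose m k : ℝ)) ^ r * ((m : ℝ) ^ k) ^ r) := by ring
      _ ≤ (Real.exp (-(3 * m : ℝ)) * Real.exp (m : ℝ) * Real.exp (m : ℝ))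
            * (((Nat.choose m k : ℝ)) ^ r * ((m : ℝ) ^ k) ^ r) := by
          exact mul_le_mul_of_nonneg_right hscalar (by positivity)
      _ = Real.exp (-(m : ℝ)) * (Nat.choose m k : ℝ) ^ r * ((m : ℝ) ^ k) ^ r := by
          rw [hexpm]; ring
  calc ((Finset.univ.filter (fun I => ¬ pred I)).card : ℝ)
      ≤ ((Nat.choose ℓ r * Nat.choose m t *
          ((Nat.choose (m - t) k) ^ r * (Nat.choose m k) ^ (ℓ - r)) : ℕ) : ℝ) := by
        exact_mod_cast hBadcard
    _ ≤ ((ℓ : ℝ)) ^ r * (2 : ℝ) ^ m *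
          (((Nat.choose (m - t) k : ℝ)) ^ r * ((Nat.choose m k : ℝ)) ^ (ℓ - r)) := by
        push_cast
        have hcl : ((Nat.choose ℓ r : ℝ)) ≤ (ℓ : ℝ) ^ r := by
          exact_mod_cast Nat.choose_le_pow ℓ r
        have hct : ((Nat.choose m t : ℝ)) ≤ (2 : ℝ) ^ m := by
          exact_mod_cast choose_le_two_pow' m t
        refine mul_le_mul ?_ le_rfl (by positivity) (by positivity)
        exact mul_le_mul hcl hct (Nat.cast_nonneg _) (by positivity)
    _ = (((ℓ : ℝ)) ^ r * (2 : ℝ) ^ m * ((Nat.choose (m - t) k : ℝ)) ^ r)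
          * ((Nat.choose m k : ℝ)) ^ (ℓ - r) := by ring
    _ ≤ (Real.exp (-(m : ℝ)) * (Nat.choose m k : ℝ) ^ r)
          * ((Nat.choose m k : ℝ)) ^ (ℓ - r) := by
        exact mul_le_mul_of_nonneg_right hS1 (by positivity)
    _ = Real.exp (-(m : ℝ)) * ((Nat.choose m k : ℝ)) ^ ℓ := by
        rw [hpow]; ring
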